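/- Let F_q be a finite field of characteristic p, let r, s be positive integers with s ≤ p, let α_1,…,α_r be distinct elements of F_q, and let y = (y_{i,j}) be an s×r matrix over F_q. Then there exists a unique polynomial H ∈ F_q[X] of degree at most rs−1 such that ∂^(j−1)H(α_i) = y_{j,i} for all 1 ≤ i ≤ r and 1 ≤ j ≤ s. -/

import Mathlib

open Polynomial

private lemma pow_sub_dvd_of_hasseDeriv {F : Type*} [Field F] (f : F[X]) (a : F) (n : ℕ)
    (h : ∀ k < n, (hasseDeriv k f).eval a = 0) : (X - C a) ^ n ∣ f := by
  conv_rhs => rw [← sum_taylor_eq f a]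
  unfold Polynomial.sum
  refine Finset.dvd_sum fun i hi => ?_
  rcases lt_or_ge i n with hin | hin
  · have : (taylor a f).coeff i = 0 := by rw [taylor_coeff]; exact h i hin
    simp [this]
  · exact Dvd.dvd.mul_left (pow_dvd_pow _ hin) _

private lemma eq_zero_of_hermite {F : Type*} [Field F] {r s : ℕ}
    (α : Fin r → F) (hα : Function.Injective α) (f : F[X])
    (hdeg : f.degree < (r * s : ℕ))
    (h : ∀ (i : Fin r) (j : Fin s), (hasseDeriv j.val f).eval (α i) = 0) : f = 0 := by
  by_contra hf
  have hdvd : (∏ i : Fin r, (X - C (α i)) ^ s) ∣ f := by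
    refine Fintype.prod_dvd_of_coprime (fun i j hij => ?_) (fun i => ?_)
    · exact (pairwise_coprime_X_sub_C hα hij).pow
    · refine pow_sub_dvd_of_hasseDeriv f (α i) s fun k hk => h i ⟨k, hk⟩
  have hdegp : ((∏ i : Fin r, (X - C (α i)) ^ s)).natDegree = r * s := by
    rw [natDegree_prod]
    · simp [natDegree_pow, Finset.sum_const, Finset.card_univ]
    · intro i _
      exact pow_ne_zero _ (X_sub_C_ne_zero (α i))
  have := Polynomial.natDegree_le_of_dvd hdvd hf
  rw [hdegp] at this
  have := Polynomial.degree_eq_natDegree hf ▸ hdeg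
  exact absurd (Nat.cast_lt.mp this) (not_lt.mpr ‹r * s ≤ f.natDegree›)

/-- **Hermite interpolation.** Over a finite field `F` of characteristic `p`,
given `r, s > 0` with `s ≤ p`, distinct points `α 1, …, α r` and prescribed values
`y : Matrix (Fin s) (Fin r) F`, there is a unique polynomial `H` of degree at most `r*s - 1`
(i.e. of degree `< r*s`) with `∂^(j-1) H (α i) = y j i` for all `i, j`. -/
theorem hermite_interpolation_existsUnique {F : Type*} [Field F] [Fintype F]
    (p : ℕ) [CharP F p] {r s : ℕ} (hr : 0 < r) (hs : 0 < s) (hsp : s ≤ p)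
    (α : Fin r → F) (hα : Function.Injective α)
    (y : Matrix (Fin s) (Fin r) F) :
    ∃! H : Polynomial F, H.degree < (r * s : ℕ) ∧
      ∀ (i : Fin r) (j : Fin s),
        (Polynomial.hasseDeriv j.val H).eval (α i) = y j i := by
  -- the linear evaluation map
  let L : degreeLT F (r * s) →ₗ[F] Matrix (Fin s) (Fin r) F :=
    { toFun := fun f => Matrix.of fun j i => (hasseDeriv j.val f.1).eval (α i)
      map_add' := by intros; ext j i; simp
      map_smul' := by intros; ext j i; simp }
  have hinj : Function.Injective L := by
    rw [← LinearMap.ker_eq_bot, LinearMap.ker_eq_bot']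
    intro f hf
    have hz : f.1 = 0 := by
      refine eq_zero_of_hermite α hα f.1 (Polynomial.mem_degreeLT.mp f.2) fun i j => ?_
      have := congrFun (congrFun (congrArg Matrix.of.symm hf) j) i
      simpa [L] using this
    exact Subtype.ext hz
  have hfin : FiniteDimensional F (degreeLT F (r * s)) :=
    LinearEquiv.finiteDimensional (degreeLTEquiv F (r * s)).symm
  have hrank : Module.finrank F (degreeLT F (r * s)) =
      Module.finrank F (Matrix (Fin s) (Fin r) F) := by
    rw [(degreeLTEquiv F (r * s)).finrank_eq, Module.finrank_matrix]
    simp [Nat.mul_comm]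
  have hsurj : Function.Surjective L :=
    (LinearMap.injective_iff_surjective_of_finrank_eq_finrank hrank).mp hinj
  obtain ⟨f, hfy⟩ := hsurj y
  refine ⟨f.1, ⟨Polynomial.mem_degreeLT.mp f.2, fun i j => ?_⟩, ?_⟩
  · have := congrFun (congrFun hfy j) i
    simpa [L] using this
  · rintro g ⟨hgdeg, hg⟩
    have hz : g - f.1 = 0 := by
      refine eq_zero_of_hermite (s := s) α hα _ ?_ fun i j => ?_
      · exact lt_of_le_of_lt (Polynomial.degree_sub_le _ _)
          (max_lt hgdeg (Polynomial.mem_degreeLT.mp f.2))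
      · have h1 := hg i j
        have h2 : (hasseDeriv j.val f.1).eval (α i) = y j i := by
          have := congrFun (congrFun hfy j) i
          simpa [L] using this
        simp [map_sub, h1, h2]
    exact sub_eq_zero.mp hz
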